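/- Let f be a function holomorphic on a punctured disc D\{z₀} with an isolated singularity at z₀, and suppose the density ρ_f = 4|f′|²/(1+|f|²)² is bounded on D\{z₀}. Then the singularity of f at z₀ is removable or a pole; in particular f extends to a meromorphic function on D. -/

import Mathlib

open Filter Metric Set Complex

private lemma aux_normSq_deriv (w : ℂ) :
    ∃ Q : ℂ →L[ℝ] ℝ, HasFDerivAt Complex.normSq Q w ∧ ‖Q‖ ≤ 2 * ‖w‖ := by
  refine ⟨(2 * w.re) • Complex.reCLM + (2 * w.im) • Complex.imCLM, ?_, ?_⟩
  · have h := ((Complex.reCLM.hasFDerivAt (x := w)).mul (Complex.reCLM.hasFDerivAt (x := w))).add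
      ((Complex.imCLM.hasFDerivAt (x := w)).mul (Complex.imCLM.hasFDerivAt (x := w)))
    have he : Complex.normSq = fun z : ℂ =>
        Complex.reCLM z * Complex.reCLM z + Complex.imCLM z * Complex.imCLM z := by
      funext z; simp [Complex.normSq_apply]
    rw [he]
    have hQeq : (2 * w.re) • Complex.reCLM + (2 * w.im) • Complex.imCLM =
        Complex.reCLM w • Complex.reCLM + Complex.reCLM w • Complex.reCLM +
          (Complex.imCLM w • Complex.imCLM + Complex.imCLM w • Complex.imCLM) := by
      simp only [Complex.reCLM_apply, Complex.imCLM_apply]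
      module
    rw [hQeq]
    exact h
  · refine ContinuousLinearMap.opNorm_le_bound _ (by positivity) fun v => ?_
    have hw : ‖w‖^2 = w.re^2 + w.im^2 := by
      rw [Complex.sq_norm, Complex.normSq_apply]; ring
    have hv : ‖v‖^2 = v.re^2 + v.im^2 := by
      rw [Complex.sq_norm, Complex.normSq_apply]; ring
    have hXY : (‖w‖*‖v‖)^2 = (w.re^2 + w.im^2) * (v.re^2 + v.im^2) := by
      rw [mul_pow, hw, hv]
    simp only [ContinuousLinearMap.add_apply, ContinuousLinearMap.coe_smul',
      Pi.smul_apply, Complex.reCLM_apply, Complex.imCLM_apply, smul_eq_mul,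
      Real.norm_eq_abs]
    rw [abs_le]
    constructor <;>
      nlinarith [sq_nonneg (w.re*v.im - w.im*v.re), sq_nonneg (w.re*v.im + w.im*v.re),
        mul_nonneg (norm_nonneg w) (norm_nonneg v), hXY]

private lemma seg_avoid_base {z₀ z : ℂ} (hz : z ≠ z₀) :
    z₀ ∉ segment ℝ z (z₀ + Complex.I * (z - z₀)) := by
  rintro ⟨a, b, ha, hb, hab, H⟩
  rw [Complex.real_smul, Complex.real_smul] at H
  have habC : ((a : ℂ) + b) = 1 := by exact_mod_cast hab
  have H1' : ((a : ℂ) + b * Complex.I) * (z - z₀) = 0 := by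
    linear_combination H - z₀ * habC
  have hfac := (mul_eq_zero.1 H1').resolve_right (sub_ne_zero.2 hz)
  have h1 : a = 0 := by simpa using congrArg Complex.re hfac
  have h2 : b = 0 := by simpa using congrArg Complex.im hfac
  rw [h1, h2] at hab; norm_num at hab

private lemma seg_avoid_rot {z₀ z w : ℂ} (hz : z ≠ z₀) (hw : w ≠ z₀)
    (hzw : z₀ ∈ segment ℝ z w) : z₀ ∉ segment ℝ (z₀ + Complex.I * (z - z₀)) w := by
  obtain ⟨a, b, ha, hb, hab, H⟩ := hzw
  rintro ⟨c, d, hc, hd, hcd, H2⟩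
  rw [Complex.real_smul, Complex.real_smul] at H H2
  have habC : ((a : ℂ) + b) = 1 := by exact_mod_cast hab
  have hcdC : ((c : ℂ) + d) = 1 := by exact_mod_cast hcd
  have H1' : (a : ℂ) * (z - z₀) + (b : ℂ) * (w - z₀) = 0 := by
    linear_combination H - z₀ * habC
  have H2' : (c : ℂ) * (Complex.I * (z - z₀)) + (d : ℂ) * (w - z₀) = 0 := by
    linear_combination H2 - z₀ * hcdC
  have ha0 : a ≠ 0 := by
    rintro rfl
    have hb1 : b = 1 := by linarith
    rw [hb1] at H1'
    simp only [Complex.ofReal_zero, zero_mul, Complex.ofReal_one, one_mul, zero_add] at H1'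
    exact hw (sub_eq_zero.1 H1')
  have hb0 : b ≠ 0 := by
    rintro rfl
    have ha1 : a = 1 := by linarith
    rw [ha1] at H1'
    simp only [Complex.ofReal_zero, zero_mul, Complex.ofReal_one, one_mul, add_zero] at H1'
    exact hz (sub_eq_zero.1 H1')
  have hkey : ((b : ℂ) * c * Complex.I - (d : ℂ) * a) * (z - z₀) = 0 := by
    linear_combination (b : ℂ) * H2' - (d : ℂ) * H1'
  have hfac := (mul_eq_zero.1 hkey).resolve_right (sub_ne_zero.2 hz)
  have hre : d = 0 ∨ a = 0 := by simpa using congrArg Complex.re hfac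
  have him : b = 0 ∨ c = 0 := by simpa using congrArg Complex.im hfac
  rcases hre with hd0 | ha0'
  · have hc1 : c = 1 := by linarith
    rcases him with h | h
    · exact hb0 h
    · rw [hc1] at h; norm_num at h
  · exact ha0 ha0'

private lemma seg_avoid_radial {z₀ : ℂ} {s t : ℝ} (hs : 0 < s) (ht : 0 < t) :
    z₀ ∉ segment ℝ (z₀ + (s : ℂ)) (z₀ + (t : ℂ)) := by
  rintro ⟨a, b, ha, hb, hab, H⟩
  rw [Complex.real_smul, Complex.real_smul] at H
  have habC : ((a : ℂ) + b) = 1 := by exact_mod_cast hab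
  have h0C : ((a * s + b * t : ℝ) : ℂ) = 0 := by
    push_cast
    linear_combination H - z₀ * habC
  have h0 : a * s + b * t = 0 := by exact_mod_cast h0C
  have has : a * s = 0 :=
    le_antisymm (by linarith [mul_nonneg hb ht.le]) (mul_nonneg ha hs.le)
  have hbt : b * t = 0 := by linarith
  have ha0 : a = 0 := by
    rcases mul_eq_zero.1 has with h | h
    · exact h
    · exact absurd h hs.ne'
  have hb0 : b = 0 := by
    rcases mul_eq_zero.1 hbt with h | h
    · exact h
    · exact absurd h ht.ne'
  linarith

theorem bounded_density_implies_meromorphic (z₀ : ℂ) (r : ℝ) (hr : 0 < r)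
    (f : ℂ → ℂ) (hf : DifferentiableOn ℂ f (Metric.ball z₀ r \ {z₀}))
    (C : ℝ)
    (hbound : ∀ z ∈ Metric.ball z₀ r \ {z₀},
      4 * ‖deriv f z‖ ^ 2 / (1 + ‖f z‖ ^ 2) ^ 2 ≤ C) :
    ((∃ c : ℂ, Filter.Tendsto f (nhdsWithin z₀ {z₀}ᶜ) (nhds c)) ∨
      Filter.Tendsto (fun z => ‖f z‖) (nhdsWithin z₀ {z₀}ᶜ) Filter.atTop) ∧
    MeromorphicAt f z₀ := by
  classical
  set S := Metric.ball z₀ r \ {z₀} with hSdef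
  have hSopen : IsOpen S := Metric.isOpen_ball.sdiff isClosed_singleton
  have hC : 0 ≤ C := by
    have hmem : z₀ + ((r/2 : ℝ) : ℂ) ∈ S := by
      constructor
      · rw [Metric.mem_ball, dist_eq_norm, add_sub_cancel_left, Complex.norm_real,
          Real.norm_eq_abs, abs_of_pos (by linarith)]
        linarith
      · simp only [Set.mem_singleton_iff, add_eq_left, Complex.ofReal_eq_zero]
        intro h; linarith
    exact le_trans (by positivity) (hbound _ hmem)
  set K := Real.sqrt C / 2 with hKdef
  have hK0 : 0 ≤ K := by positivity
  set u : ℂ → ℝ := fun w => (1 + ‖f w‖^2)⁻¹ with hudef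
  -- derivative bound
  have hderiv : ∀ z ∈ S, DifferentiableAt ℝ u z ∧ ‖fderiv ℝ u z‖ ≤ K := by
    intro z hz
    have hfz : DifferentiableAt ℂ f z := hf.differentiableAt (hSopen.mem_nhds hz)
    have hA : HasDerivAt f (deriv f z) z := hfz.hasDerivAt
    set F₁ := (ContinuousLinearMap.smulRight (1 : ℂ →L[ℂ] ℂ) (deriv f z)).restrictScalars ℝ
      with hF₁def
    have hF : HasFDerivAt f F₁ z := hA.hasFDerivAt.restrictScalars ℝ
    have hF₁n : ‖F₁‖ ≤ ‖deriv f z‖ := by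
      rw [hF₁def, ContinuousLinearMap.norm_restrictScalars,
        ContinuousLinearMap.norm_smulRight_apply]
      simp [ContinuousLinearMap.one_def]
    obtain ⟨Q, hQ, hQn⟩ := aux_normSq_deriv (f z)
    have hT : HasFDerivAt (fun w => 1 + Complex.normSq (f w)) (Q.comp F₁) z := by
      simpa using (hQ.comp z hF).const_add (1 : ℝ)
    have hpos : (0 : ℝ) < 1 + Complex.normSq (f z) := by
      have := Complex.normSq_nonneg (f z); linarith
    have hinv := (hasFDerivAt_inv (x := 1 + Complex.normSq (f z)) hpos.ne').comp z hT
    set D := (ContinuousLinearMap.smulRight (1 : ℝ →L[ℝ] ℝ)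
      (-((1 + Complex.normSq (f z)) ^ 2)⁻¹)).comp (Q.comp F₁) with hDdef
    have huz : HasFDerivAt u D z := by
      have hue : u = (fun y : ℝ => y⁻¹) ∘ (fun w => 1 + Complex.normSq (f w)) := by
        funext p
        simp [hudef, Function.comp, Complex.sq_norm]
      rw [hue]
      exact hinv
    refine ⟨huz.differentiableAt, ?_⟩
    rw [huz.fderiv]
    have hbQ : Complex.normSq (f z) = ‖f z‖^2 := by
      rw [Complex.sq_norm]
    set b := 1 + ‖f z‖^2 with hbdef
    have hbpos : (0 : ℝ) < b := by positivity
    have h2fz : 2 * ‖f z‖ ≤ b := by nlinarith [sq_nonneg (‖f z‖ - 1)]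
    have h2A : 2 * ‖deriv f z‖ ≤ Real.sqrt C * b := by
      have h := hbound z hz
      have hsq : (2 * ‖deriv f z‖ / b)^2 ≤ C := by
        have : (2 * ‖deriv f z‖ / b)^2 = 4 * ‖deriv f z‖^2 / b^2 := by
          rw [div_pow]; ring_nf
        rw [this]; exact h
      have hle : 2 * ‖deriv f z‖ / b ≤ Real.sqrt C := by
        exact (Real.le_sqrt (by positivity) hC).2 hsq
      calc 2 * ‖deriv f z‖ = (2 * ‖deriv f z‖ / b) * b := by field_simp
        _ ≤ Real.sqrt C * b := mul_le_mul_of_nonneg_right hle hbpos.le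
    calc ‖D‖ ≤ ‖ContinuousLinearMap.smulRight (1 : ℝ →L[ℝ] ℝ)
          (-((1 + Complex.normSq (f z)) ^ 2)⁻¹)‖ * ‖Q.comp F₁‖ :=
        ContinuousLinearMap.opNorm_comp_le _ _
      _ ≤ (b^2)⁻¹ * (2 * ‖f z‖ * ‖deriv f z‖) := by
          have hn1 : ‖ContinuousLinearMap.smulRight (1 : ℝ →L[ℝ] ℝ)
              (-((1 + Complex.normSq (f z)) ^ 2)⁻¹)‖ = (b^2)⁻¹ := by
            rw [ContinuousLinearMap.norm_smulRight_apply, norm_neg, Real.norm_eq_abs,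
              abs_inv, abs_of_pos (by positivity), hbdef, hbQ]
            simp [ContinuousLinearMap.one_def]
          rw [hn1]
          refine mul_le_mul le_rfl ?_ (norm_nonneg _) (by positivity)
          calc ‖Q.comp F₁‖ ≤ ‖Q‖ * ‖F₁‖ := ContinuousLinearMap.opNorm_comp_le _ _
            _ ≤ (2 * ‖f z‖) * ‖deriv f z‖ :=
              mul_le_mul hQn hF₁n (norm_nonneg _) (by positivity)
            _ = 2 * ‖f z‖ * ‖deriv f z‖ := by ring
      _ ≤ (b^2)⁻¹ * (b * ‖deriv f z‖) := by
          refine mul_le_mul_of_nonneg_left ?_ (by positivity)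
          exact mul_le_mul_of_nonneg_right h2fz (norm_nonneg _)
      _ = ‖deriv f z‖ / b := by field_simp
      _ ≤ K := by
          rw [hKdef, div_le_div_iff₀ hbpos (by norm_num : (0:ℝ) < 2)]
          linarith
  -- hop lemma
  have hop : ∀ x ∈ S, ∀ y ∈ S, z₀ ∉ segment ℝ x y → |u x - u y| ≤ K * ‖x - y‖ := by
    intro x hx y hy hseg
    have hsub : segment ℝ x y ⊆ S := by
      rw [hSdef, Set.subset_diff]
      exact ⟨(convex_ball z₀ r).segment_subset hx.1 hy.1,
        Set.disjoint_singleton_right.2 hseg⟩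
    have h := Convex.norm_image_sub_le_of_norm_fderiv_le
      (fun p hp => (hderiv p (hsub hp)).1) (fun p hp => (hderiv p (hsub hp)).2)
      (convex_segment x y) (left_mem_segment ℝ x y) (right_mem_segment ℝ x y)
    rw [Real.norm_eq_abs] at h
    rw [abs_sub_comm]
    calc |u y - u x| ≤ K * ‖y - x‖ := h
      _ = K * ‖x - y‖ := by rw [norm_sub_rev]
  -- oscillation on small punctured balls
  have hosc : ∀ t : ℝ, 0 < t → t ≤ r → ∀ x ∈ Metric.ball z₀ t \ {z₀},
      ∀ y ∈ Metric.ball z₀ t \ {z₀}, |u x - u y| ≤ 4 * K * t := by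
    intro t ht htr x hx y hy
    have hxS : x ∈ S := ⟨Metric.ball_subset_ball htr hx.1, hx.2⟩
    have hyS : y ∈ S := ⟨Metric.ball_subset_ball htr hy.1, hy.2⟩
    have hxz : ‖x - z₀‖ < t := by rw [← dist_eq_norm]; exact hx.1
    have hyz : ‖y - z₀‖ < t := by rw [← dist_eq_norm]; exact hy.1
    have hxne : x ≠ z₀ := hx.2
    have hyne : y ≠ z₀ := hy.2
    by_cases hseg : z₀ ∈ segment ℝ x y
    · set m := z₀ + Complex.I * (x - z₀) with hmdef
      have hmz : ‖m - z₀‖ = ‖x - z₀‖ := by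
        rw [hmdef, add_sub_cancel_left, norm_mul, Complex.norm_I, one_mul]
      have hmS : m ∈ S := by
        constructor
        · rw [Metric.mem_ball, dist_eq_norm, hmz]; exact lt_of_lt_of_le hxz htr
        · simp only [Set.mem_singleton_iff, hmdef, add_eq_left, mul_eq_zero,
            Complex.I_ne_zero, false_or, sub_eq_zero]
          exact hxne
      have h1 : |u x - u m| ≤ K * ‖x - m‖ := hop x hxS m hmS (seg_avoid_base hxne)
      have h2 : |u m - u y| ≤ K * ‖m - y‖ := hop m hmS y hyS (seg_avoid_rot hxne hyne hseg)
      have hxm : ‖x - m‖ ≤ 2 * t := by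
        calc ‖x - m‖ = ‖(x - z₀) - (m - z₀)‖ := by ring_nf
          _ ≤ ‖x - z₀‖ + ‖m - z₀‖ := norm_sub_le _ _
          _ ≤ 2 * t := by rw [hmz]; linarith
      have hmy : ‖m - y‖ ≤ 2 * t := by
        calc ‖m - y‖ = ‖(m - z₀) - (y - z₀)‖ := by ring_nf
          _ ≤ ‖m - z₀‖ + ‖y - z₀‖ := norm_sub_le _ _
          _ ≤ 2 * t := by rw [hmz]; linarith
      calc |u x - u y| ≤ |u x - u m| + |u m - u y| := abs_sub_le _ _ _
        _ ≤ K * ‖x - m‖ + K * ‖m - y‖ := add_le_add h1 h2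
        _ ≤ K * (2*t) + K * (2*t) :=
            add_le_add (mul_le_mul_of_nonneg_left hxm hK0)
              (mul_le_mul_of_nonneg_left hmy hK0)
        _ = 4 * K * t := by ring
    · have h1 : |u x - u y| ≤ K * ‖x - y‖ := hop x hxS y hyS hseg
      have hxy : ‖x - y‖ ≤ 2 * t := by
        calc ‖x - y‖ = ‖(x - z₀) - (y - z₀)‖ := by ring_nf
          _ ≤ ‖x - z₀‖ + ‖y - z₀‖ := norm_sub_le _ _
          _ ≤ 2 * t := by linarith
      calc |u x - u y| ≤ K * ‖x - y‖ := h1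
        _ ≤ K * (2*t) := mul_le_mul_of_nonneg_left hxy hK0
        _ ≤ 4 * K * t := by nlinarith
  -- Lipschitz along the radial direction, extension, limit
  have hg : LipschitzOnWith (Real.toNNReal K) (fun s : ℝ => u (z₀ + (s:ℂ))) (Set.Ioo 0 r) := by
    rw [lipschitzOnWith_iff_dist_le_mul]
    intro s hs t ht
    have hsS : (z₀ + (s:ℂ)) ∈ S := by
      constructor
      · rw [Metric.mem_ball, dist_eq_norm, add_sub_cancel_left, Complex.norm_real,
          Real.norm_eq_abs, abs_of_pos hs.1]
        exact hs.2
      · simp only [Set.mem_singleton_iff, add_eq_left, Complex.ofReal_eq_zero]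
        exact hs.1.ne'
    have htS : (z₀ + (t:ℂ)) ∈ S := by
      constructor
      · rw [Metric.mem_ball, dist_eq_norm, add_sub_cancel_left, Complex.norm_real,
          Real.norm_eq_abs, abs_of_pos ht.1]
        exact ht.2
      · simp only [Set.mem_singleton_iff, add_eq_left, Complex.ofReal_eq_zero]
        exact ht.1.ne'
    have h := hop _ hsS _ htS (seg_avoid_radial hs.1 ht.1)
    have hdist : ‖(z₀ + (s:ℂ)) - (z₀ + (t:ℂ))‖ = |s - t| := by
      rw [show (z₀ + (s:ℂ)) - (z₀ + (t:ℂ)) = ((s - t : ℝ) : ℂ) by push_cast; ring,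
        Complex.norm_real, Real.norm_eq_abs]
    rw [hdist] at h
    rw [Real.dist_eq, Real.dist_eq, Real.coe_toNNReal K hK0]
    exact h
  obtain ⟨G, hGlip, hGeq⟩ := hg.extend_real
  set L := G 0 with hLdef
  have htendu : Filter.Tendsto u (nhdsWithin z₀ {z₀}ᶜ) (nhds L) := by
    rw [tendsto_nhdsWithin_nhds]
    intro ε hε
    set δ := min (r/2) (ε / (5 * (K+1))) with hδdef
    have hδ0 : 0 < δ := lt_min (by linarith) (by positivity)
    have hδr : δ ≤ r := le_trans (min_le_left _ _) (by linarith)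
    have hδε : 5 * (K+1) * δ ≤ ε := by
      have := min_le_right (r/2) (ε / (5 * (K+1)))
      calc 5 * (K+1) * δ ≤ 5 * (K+1) * (ε / (5 * (K+1))) := by
            refine mul_le_mul_of_nonneg_left ?_ (by positivity)
            exact min_le_right _ _
        _ = ε := by field_simp
    refine ⟨δ, hδ0, ?_⟩
    intro z hzc hzd
    have hz : z ∈ Metric.ball z₀ δ \ {z₀} := ⟨Metric.mem_ball.2 hzd, hzc⟩
    have hp : (z₀ + ((δ/2 : ℝ) : ℂ)) ∈ Metric.ball z₀ δ \ {z₀} := by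
      constructor
      · rw [Metric.mem_ball, dist_eq_norm, add_sub_cancel_left, Complex.norm_real,
          Real.norm_eq_abs, abs_of_pos (by linarith)]
        linarith
      · simp only [Set.mem_singleton_iff, add_eq_left, Complex.ofReal_eq_zero]
        intro h; linarith
    have h1 : |u z - u (z₀ + ((δ/2 : ℝ) : ℂ))| ≤ 4 * K * δ := hosc δ hδ0 hδr z hz _ hp
    have h2 : u (z₀ + ((δ/2 : ℝ) : ℂ)) = G (δ/2) :=
      hGeq ⟨by linarith, by linarith [hδr]⟩
    have h3 : |G (δ/2) - G 0| ≤ K * (δ/2) := by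
      have := hGlip.dist_le_mul (δ/2) 0
      rw [Real.dist_eq, Real.dist_eq, Real.coe_toNNReal K hK0, sub_zero,
        abs_of_pos (show (0:ℝ) < δ/2 by linarith)] at this
      exact this
    rw [Real.dist_eq]
    calc |u z - L| ≤ |u z - u (z₀ + ((δ/2 : ℝ) : ℂ))| +
          |u (z₀ + ((δ/2 : ℝ) : ℂ)) - L| := abs_sub_le _ _ _
      _ ≤ 4 * K * δ + K * (δ/2) := by
          refine add_le_add h1 ?_
          rw [h2]
          exact h3
      _ < ε := by nlinarith
  have hL0 : 0 ≤ L := ge_of_tendsto' htendu (fun z => by positivity)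
  rcases hL0.lt_or_eq with hLpos | hLzero
  · -- L > 0 : f is bounded near z₀; removable singularity
    have hev : ∀ᶠ z in nhdsWithin z₀ {z₀}ᶜ, ‖f z‖ ≤ Real.sqrt (2/L) := by
      have h := htendu.eventually (eventually_gt_nhds (by linarith : L/2 < L))
      refine h.mono fun z hz => ?_
      have h1 : (0:ℝ) < 1 + ‖f z‖^2 := by positivity
      have h2 : ‖f z‖^2 ≤ 2/L := by
        have hz' : L/2 < (1 + ‖f z‖^2)⁻¹ := hz
        have h3 : L/2 * (1 + ‖f z‖^2) < 1 := by
          calc L/2 * (1 + ‖f z‖^2) < (1 + ‖f z‖^2)⁻¹ * (1 + ‖f z‖^2) :=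
              mul_lt_mul_of_pos_right hz' h1
            _ = 1 := inv_mul_cancel₀ h1.ne'
        rw [le_div_iff₀ hLpos]
        nlinarith
      calc ‖f z‖ = Real.sqrt (‖f z‖^2) := (Real.sqrt_sq (norm_nonneg _)).symm
        _ ≤ Real.sqrt (2/L) := Real.sqrt_le_sqrt h2
    obtain ⟨ε, hε, hball⟩ := Metric.mem_nhdsWithin_iff.1 hev
    set t := min ε r with htdef
    have ht0 : 0 < t := lt_min hε hr
    have htr : t ≤ r := min_le_right _ _
    have hsubS : Metric.ball z₀ t \ {z₀} ⊆ S :=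
      fun p hp => ⟨Metric.ball_subset_ball htr hp.1, hp.2⟩
    have hbdd : BddAbove (norm ∘ f '' (Metric.ball z₀ t \ {z₀})) := by
      refine ⟨Real.sqrt (2/L), ?_⟩
      rintro x ⟨p, hp, rfl⟩
      exact hball ⟨Metric.ball_subset_ball (min_le_left _ _) hp.1, hp.2⟩
    have hupdate := Complex.differentiableOn_update_limUnder_of_bddAbove
      (Metric.ball_mem_nhds z₀ ht0) (hf.mono hsubS) hbdd
    set F := Function.update f z₀ (limUnder (nhdsWithin z₀ {z₀}ᶜ) f) with hFdef
    have hFan : AnalyticAt ℂ F z₀ := hupdate.analyticAt (Metric.ball_mem_nhds z₀ ht0)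
    have heqv : F =ᶠ[nhdsWithin z₀ {z₀}ᶜ] f :=
      Filter.eventually_of_mem self_mem_nhdsWithin
        (fun p hp => Function.update_of_ne (by simpa using hp) _ _)
    refine ⟨Or.inl ⟨F z₀, ?_⟩, hFan.meromorphicAt.congr heqv⟩
    have hcont : Filter.Tendsto F (nhds z₀) (nhds (F z₀)) := hFan.continuousAt
    exact (hcont.mono_left nhdsWithin_le_nhds).congr' heqv
  · -- L = 0 : |f| → ∞; pole
    have htend0 : Filter.Tendsto u (nhdsWithin z₀ {z₀}ᶜ) (nhds 0) := by
      rw [hLzero]; exact htendu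
    have hIoi : Filter.Tendsto u (nhdsWithin z₀ {z₀}ᶜ) (nhdsWithin 0 (Set.Ioi 0)) :=
      tendsto_nhdsWithin_of_tendsto_nhds_of_eventually_within _ htend0
        (Filter.Eventually.of_forall fun z => by
          show (0:ℝ) < (1 + ‖f z‖^2)⁻¹; positivity)
    have hinv : Filter.Tendsto (fun z => (u z)⁻¹) (nhdsWithin z₀ {z₀}ᶜ) Filter.atTop :=
      hIoi.inv_tendsto_nhdsGT_zero
    have huinv : ∀ z, (u z)⁻¹ = 1 + ‖f z‖^2 := fun z => by
      show ((1 + ‖f z‖^2)⁻¹)⁻¹ = _; rw [inv_inv]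
    have htop : Filter.Tendsto (fun z => ‖f z‖) (nhdsWithin z₀ {z₀}ᶜ) Filter.atTop := by
      rw [Filter.tendsto_atTop]
      intro c
      refine (hinv.eventually_ge_atTop (1 + (max c 0)^2)).mono fun z hz => ?_
      rw [huinv z] at hz
      have h1 : (max c 0)^2 ≤ ‖f z‖^2 := by linarith
      have h2 : max c 0 ≤ ‖f z‖ := by
        nlinarith [norm_nonneg (f z), le_max_right c 0]
      exact le_trans (le_max_left c 0) h2
    have hev1 : ∀ᶠ z in nhdsWithin z₀ {z₀}ᶜ, 1 ≤ ‖f z‖ := htop.eventually_ge_atTop 1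
    obtain ⟨ε, hε, hball⟩ := Metric.mem_nhdsWithin_iff.1 hev1
    set t := min ε r with htdef
    have ht0 : 0 < t := lt_min hε hr
    have htr : t ≤ r := min_le_right _ _
    have hone : ∀ p ∈ Metric.ball z₀ t \ {z₀}, 1 ≤ ‖f p‖ :=
      fun p hp => hball ⟨Metric.ball_subset_ball (min_le_left _ _) hp.1, hp.2⟩
    have hne0 : ∀ p ∈ Metric.ball z₀ t \ {z₀}, f p ≠ 0 := by
      intro p hp h0
      have := hone p hp
      rw [h0, norm_zero] at this; linarith
    have hsubS : Metric.ball z₀ t \ {z₀} ⊆ S :=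
      fun p hp => ⟨Metric.ball_subset_ball htr hp.1, hp.2⟩
    have hdinv : DifferentiableOn ℂ (fun p => (f p)⁻¹) (Metric.ball z₀ t \ {z₀}) :=
      (hf.mono hsubS).inv hne0
    have hbdd : BddAbove (norm ∘ (fun p => (f p)⁻¹) '' (Metric.ball z₀ t \ {z₀})) := by
      refine ⟨1, ?_⟩
      rintro x ⟨p, hp, rfl⟩
      show ‖(f p)⁻¹‖ ≤ 1
      rw [norm_inv]
      exact inv_le_one_iff₀.2 (Or.inr (hone p hp))
    have hupdate := Complex.differentiableOn_update_limUnder_of_bddAbove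
      (Metric.ball_mem_nhds z₀ ht0) hdinv hbdd
    set G' := Function.update (fun p => (f p)⁻¹) z₀
      (limUnder (nhdsWithin z₀ {z₀}ᶜ) (fun p => (f p)⁻¹)) with hG'def
    have hGan : AnalyticAt ℂ G' z₀ := hupdate.analyticAt (Metric.ball_mem_nhds z₀ ht0)
    have hmem : Metric.ball z₀ t \ {z₀} ∈ nhdsWithin z₀ {z₀}ᶜ := by
      rw [Set.diff_eq]
      exact Filter.inter_mem (mem_nhdsWithin_of_mem_nhds (Metric.ball_mem_nhds z₀ ht0))
        self_mem_nhdsWithin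
    have heqv : G'⁻¹ =ᶠ[nhdsWithin z₀ {z₀}ᶜ] f := by
      refine Filter.eventually_of_mem hmem fun p hp => ?_
      have hGp : G' p = (f p)⁻¹ :=
        Function.update_of_ne (by simpa using hp.2) _ _
      show (G' p)⁻¹ = f p
      rw [hGp, inv_inv]
    exact ⟨Or.inr htop, (hGan.meromorphicAt.inv).congr heqv⟩
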